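/- arXiv:1105.1936 — 2 statements merged into one kernel-verified Lean document; each statement's English description precedes it below -/
import Mathlib

section
/- Let (u,v) : I → (−1,1) × ℝ be a solution of the ODE u' = v, v' = −νv + 4uv(v + B/√2)/(1−u²) + u, with B > 0, and suppose at some time t₀ ∈ I we have u(t₀) < 0 and v(t₀) < 0. Then for all t ∈ I with t ≥ t₀, u(t) ≤ u(t₀) < 0 and v(t) ≤ 0; in particular u is nonincreasing on [t₀, ∞) ∩ I. (The quadrant {U ≤ 0, V ≤ 0} is forward invariant.) -/
open Real Set Filter Topology

theorem third_quadrant_forward_invariant (ν B : ℝ) (hB : 0 < B)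
    (I : Set ℝ) (hI : I.OrdConnected)
    (u v : ℝ → ℝ)
    (hu : ∀ t ∈ I, HasDerivAt u (v t) t)
    (hv : ∀ t ∈ I, HasDerivAt v
      (-ν * v t + 4 * u t * v t * (v t + B / Real.sqrt 2) / (1 - (u t) ^ 2) + u t) t)
    (hrange : ∀ t ∈ I, u t ∈ Ioo (-1 : ℝ) 1)
    (t₀ : ℝ) (ht₀ : t₀ ∈ I) (hu0 : u t₀ < 0) (hv0 : v t₀ < 0) :
    (∀ t ∈ I, t₀ ≤ t → u t ≤ u t₀ ∧ v t ≤ 0) ∧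
      AntitoneOn u ({t | t₀ ≤ t} ∩ I) := by
  -- Icc subsets of I
  have hIcc : ∀ {a b : ℝ}, a ∈ I → b ∈ I → Icc a b ⊆ I := fun ha hb => hI.out ha hb
  -- u is antitone on Icc a b ⊆ I whenever v ≤ 0 on Ioo a b
  have hanti : ∀ a b : ℝ, a ∈ I → b ∈ I → (∀ s ∈ Ioo a b, v s ≤ 0) →
      AntitoneOn u (Icc a b) := by
    intro a b ha hb hvneg
    have hsub := hIcc ha hb
    refine antitoneOn_of_deriv_nonpos (convex_Icc a b)
      (fun s hs => (hu s (hsub hs)).continuousAt.continuousWithinAt)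
      (fun s hs => ?_) (fun s hs => ?_)
    · rw [interior_Icc] at hs
      exact (hu s (hsub (Ioo_subset_Icc_self hs))).differentiableAt.differentiableWithinAt
    · rw [interior_Icc] at hs
      rw [(hu s (hsub (Ioo_subset_Icc_self hs))).deriv]
      exact hvneg s hs
  -- Key claim: v ≤ 0 on [t₀, t] for every t ∈ I with t₀ ≤ t.
  have key : ∀ t ∈ I, t₀ ≤ t → ∀ s ∈ Icc t₀ t, v s ≤ 0 := by
    intro t ht htt
    by_contra hneg
    push_neg at hneg
    obtain ⟨s₁, hs₁, hs₁v⟩ := hneg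
    -- the set where v ≥ 0
    set A : Set ℝ := Icc t₀ t ∩ v ⁻¹' (Ici 0) with hA
    have hAne : A.Nonempty := ⟨s₁, hs₁, le_of_lt hs₁v⟩
    have hsub := hIcc ht₀ ht
    have hAclosed : IsClosed A := by
      apply ContinuousOn.preimage_isClosed_of_isClosed
        (fun s hs => (hv s (hsub hs)).continuousAt.continuousWithinAt)
        isClosed_Icc isClosed_Ici
    have hAbdd : BddBelow A := ⟨t₀, fun x hx => hx.1.1⟩
    set c := sInf A with hc
    have hcA : c ∈ A := hAclosed.csInf_mem hAne hAbdd
    have hcI : c ∈ Icc t₀ t := hcA.1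
    have hvc0 : 0 ≤ v c := hcA.2
    have hct₀ : t₀ < c := by
      rcases lt_or_eq_of_le hcI.1 with h | h
      · exact h
      · exact absurd (h ▸ hvc0) (not_le.mpr hv0)
    -- v < 0 strictly before c
    have hbefore : ∀ s ∈ Ico t₀ c, v s < 0 := by
      intro s hs
      by_contra h
      push_neg at h
      have : s ∈ A := ⟨⟨hs.1, hs.2.le.trans hcI.2⟩, h⟩
      exact absurd (csInf_le hAbdd this) (not_le.mpr hs.2)
    have hcmem : c ∈ I := hsub hcI
    -- v c = 0 by continuity from the left
    have hvcle : v c ≤ 0 := by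
      have htend : Tendsto v (𝓝[<] c) (𝓝 (v c)) :=
        (hv c hcmem).continuousAt.continuousWithinAt.tendsto
      refine le_of_tendsto htend ?_
      filter_upwards [Ioo_mem_nhdsLT_of_mem (show c ∈ Ioc t₀ c from ⟨hct₀, le_rfl⟩)]
        with s hs
      exact (hbefore s ⟨hs.1.le, hs.2⟩).le
    have hvc : v c = 0 := le_antisymm hvcle hvc0
    -- u c ≤ u t₀ < 0
    have huc : u c ≤ u t₀ := by
      have := hanti t₀ c ht₀ hcmem (fun s hs => (hbefore s ⟨hs.1.le, hs.2⟩).le)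
      exact this ⟨le_rfl, hct₀.le⟩ ⟨hct₀.le, le_rfl⟩ hct₀.le
    have hucneg : u c < 0 := lt_of_le_of_lt huc hu0
    -- derivative of v at c is u c
    have hderiv : HasDerivAt v (u c) c := by
      have := hv c hcmem
      rw [hvc] at this
      simpa using this
    -- but left slopes are nonneg
    have hslope : Tendsto (slope v c) (𝓝[<] c) (𝓝 (u c)) :=
      (hasDerivAt_iff_tendsto_slope.mp hderiv).mono_left
        (nhdsWithin_mono _ fun x hx => ne_of_lt hx)
    have : 0 ≤ u c := by
      refine ge_of_tendsto hslope ?_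
      filter_upwards [Ioo_mem_nhdsLT_of_mem (show c ∈ Ioc t₀ c from ⟨hct₀, le_rfl⟩)]
        with s hs
      have hvs : v s < 0 := hbefore s ⟨hs.1.le, hs.2⟩
      have hsc : s - c < 0 := sub_neg.mpr hs.2
      have : slope v c s = (v s - v c) / (s - c) := slope_def_field v c s
      rw [this, hvc, sub_zero]
      exact (div_pos_of_neg_of_neg hvs hsc).le
    exact absurd this (not_le.mpr hucneg)
  -- monotonicity of u
  have mono : ∀ a b : ℝ, a ∈ I → b ∈ I → t₀ ≤ a → a ≤ b → u b ≤ u a := by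
    intro a b ha hb ht₀a hab
    have hvle : ∀ s ∈ Ioo a b, v s ≤ 0 := fun s hs =>
      key b hb (ht₀a.trans hab) s ⟨ht₀a.trans hs.1.le, hs.2.le⟩
    exact hanti a b ha hb hvle ⟨le_rfl, hab⟩ ⟨hab, le_rfl⟩ hab
  constructor
  · intro t ht htt
    exact ⟨mono t₀ t ht₀ ht le_rfl htt, key t ht htt t ⟨htt, le_rfl⟩⟩
  · intro a ha b hb hab
    exact mono a b ha.2 hb.2 ha.1 hab
end

section
/- Let A, B > 0 with A(1+B²) > 1, and define φ(t,x,v) = λ·exp(−(√(A(1+B²)) − 1)·t)·exp(−(1/2)·√(A/(1+B²))·(v − Bx)²) for a constant λ > 0. Then φ is a classical solution of ∂ₜφ − Δₓφ − Δᵥφ = (1 − A(v−Bx)²)·φ on ℝ⁺ × ℝ × ℝ. -/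
open Real

/-- Time partial derivative. -/
noncomputable def dt (u : ℝ → ℝ → ℝ → ℝ) (t x v : ℝ) : ℝ :=
  deriv (fun s => u s x v) t

/-- Second partial derivative in `x`. -/
noncomputable def dxx (u : ℝ → ℝ → ℝ → ℝ) (t x v : ℝ) : ℝ :=
  deriv (deriv (fun y => u t y v)) x

/-- Second partial derivative in `v`. -/
noncomputable def dvv (u : ℝ → ℝ → ℝ → ℝ) (t x v : ℝ) : ℝ :=
  deriv (deriv (fun w => u t x w)) v

lemma quad_hasDerivAt (c a b z : ℝ) :
    HasDerivAt (fun z => -(1/2)*c*(b*z-a)^2) (-(c*b*(b*z-a))) z := by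
  have h := ((((hasDerivAt_id z).const_mul b).sub_const a).pow 2).const_mul (-(1/2)*c)
  refine h.congr_deriv ?_
  simp only [id_eq]
  ring

lemma gauss_dd (K c a b : ℝ) (w : ℝ) :
    deriv (deriv (fun w => K * Real.exp (-(1/2)*c*(b*w-a)^2))) w
      = K * (c^2*b^2*(b*w-a)^2 - c*b^2) * Real.exp (-(1/2)*c*(b*w-a)^2) := by
  have h1 : deriv (fun w => K * Real.exp (-(1/2)*c*(b*w-a)^2))
      = fun z => K * (-(c*b*(b*z-a))) * Real.exp (-(1/2)*c*(b*z-a)^2) := by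
    funext z
    have h := ((quad_hasDerivAt c a b z).exp.const_mul K).deriv
    rw [h]; ring
  rw [h1]
  have hu : HasDerivAt (fun z => K * (-(c*b*(b*z-a)))) (K * (-(c*b*b))) w := by
    have h : HasDerivAt (fun z => K*c*b*a + (-(K*c*b*b))*z) (-(K*c*b*b)) w := by
      simpa using ((hasDerivAt_id w).const_mul (-(K*c*b*b))).const_add (K*c*b*a)
    have hfun : (fun z => K * (-(c*b*(b*z-a)))) = fun z => K*c*b*a + (-(K*c*b*b))*z := by
      funext z; ring
    rw [hfun, show K * (-(c*b*b)) = -(K*c*b*b) by ring]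
    exact h
  have h2 := hu.fun_mul (quad_hasDerivAt c a b w).exp
  have h3 := h2.deriv
  rw [h3]; ring

theorem gaussian_supersolution (A B lam : ℝ) (hA : 0 < A) (hB : 0 < B)
    (hlam : 0 < lam) (hAB : A * (1 + B ^ 2) > 1) :
    ∀ t x v : ℝ, 0 ≤ t →
      let φ : ℝ → ℝ → ℝ → ℝ := fun t x v =>
        lam * Real.exp (-(Real.sqrt (A * (1 + B ^ 2)) - 1) * t) *
          Real.exp (-(1 / 2) * Real.sqrt (A / (1 + B ^ 2)) * (v - B * x) ^ 2)
      dt φ t x v - dxx φ t x v - dvv φ t x v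
        = (1 - A * (v - B * x) ^ 2) * φ t x v := by
  intro t x v ht
  intro φ
  have hBpos : (0:ℝ) < 1 + B ^ 2 := by positivity
  set c := Real.sqrt (A / (1 + B ^ 2)) with hc
  set r := Real.sqrt (A * (1 + B ^ 2)) with hr
  have hc2 : c ^ 2 = A / (1 + B ^ 2) := Real.sq_sqrt (by positivity)
  have hcr : c * (1 + B ^ 2) = r := by
    rw [hc, hr, show A * (1 + B ^ 2) = A / (1 + B ^ 2) * (1 + B ^ 2) ^ 2 by field_simp,
      Real.sqrt_mul (by positivity) ((1 + B ^ 2) ^ 2), Real.sqrt_sq hBpos.le]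
  have hA' : c ^ 2 * (1 + B ^ 2) = A := by rw [hc2]; field_simp
  set E := Real.exp (-(1 / 2) * c * (v - B * x) ^ 2) with hE
  set K := lam * Real.exp (-(r - 1) * t) with hK
  have hφ : φ t x v = K * E := rfl
  have hdt : dt φ t x v = -(r - 1) * (K * E) := by
    show deriv (fun s => lam * Real.exp (-(r - 1) * s) * E) t = _
    have h : HasDerivAt (fun s => -(r - 1) * s) (-(r - 1)) t := by
      simpa using (hasDerivAt_id t).const_mul (-(r - 1))
    have h2 := (h.exp.const_mul lam).mul_const E
    rw [h2.deriv, hK]; ring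
  have hdx : dxx φ t x v = (c ^ 2 * B ^ 2 * (v - B * x) ^ 2 - c * B ^ 2) * (K * E) := by
    have heq : (fun y => φ t y v) = fun y => K * Real.exp (-(1/2)*c*(B*y - v)^2) := by
      funext y
      show K * Real.exp (-(1 / 2) * c * (v - B * y) ^ 2) = _
      rw [show (-(1/2)*c*(B*y - v)^2 : ℝ) = -(1 / 2) * c * (v - B * y) ^ 2 by ring]
    show deriv (deriv (fun y => φ t y v)) x = _
    rw [heq, gauss_dd K c v B x, hE,
      show (-(1/2)*c*(B*x - v)^2 : ℝ) = -(1 / 2) * c * (v - B * x) ^ 2 by ring]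
    ring
  have hdv : dvv φ t x v = (c ^ 2 * (v - B * x) ^ 2 - c) * (K * E) := by
    have heq : (fun w => φ t x w) = fun w => K * Real.exp (-(1/2)*c*(1*w - B*x)^2) := by
      funext w
      show K * Real.exp (-(1 / 2) * c * (w - B * x) ^ 2) = _
      rw [show (-(1/2)*c*(1*w - B*x)^2 : ℝ) = -(1 / 2) * c * (w - B * x) ^ 2 by ring]
    show deriv (deriv (fun w => φ t x w)) v = _
    rw [heq, gauss_dd K c (B*x) 1 v, hE,
      show (-(1/2)*c*(1*v - B*x)^2 : ℝ) = -(1 / 2) * c * (v - B * x) ^ 2 by ring]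
    ring
  rw [hdt, hdx, hdv, hφ]
  linear_combination (K * E) * hcr - (K * E) * (v - B * x) ^ 2 * hA'
end
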